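/- Let 𝒢 and 𝒦 be groupoids with 𝒢₀ finite, A a unital 𝒢-graded algebra, and X a finite (𝒢_α,𝒦_β)-set that is split for both actions. Let γ be the induced action of 𝒦 on A #_α^𝒢 X, λ the induced 𝒢-action on the orbit set O^𝒦, and φ* : A #_λ^𝒢 O^𝒦 → A #_α^𝒢 X the algebra monomorphism induced by the orbit map φ(x)=o(x). Then φ*(A #_λ^𝒢 O^𝒦) = (A #_α^𝒢 X)^γ, the subalgebra of invariants of A #_α^𝒢 X under γ; in particular A #_λ^𝒢 O^𝒦 ≅ (A #_α^𝒢 X)^γ as algebras. -/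

import Mathlib

open scoped Classical

noncomputable section

universe u v w

/-- A groupoid, presented as a set of morphisms with partially defined
composition.  `s g` is the domain (source) identity `d(g)`, `t g` the range
(target) identity `r(g)`; `mul g h` is the composite `gh`, meaningful when
`s g = t h`. -/
structure Gpd (G : Type u) where
  s : G → G
  t : G → G
  inv : G → G
  mul : G → G → G
  s_s : ∀ g, s (s g) = s g
  t_s : ∀ g, t (s g) = s g
  s_t : ∀ g, s (t g) = t g
  t_t : ∀ g, t (t g) = t g
  s_mul : ∀ g h, s g = t h → s (mul g h) = s h
  t_mul : ∀ g h, s g = t h → t (mul g h) = t g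
  mul_assoc : ∀ g h l, s g = t h → s h = t l → mul (mul g h) l = mul g (mul h l)
  mul_src : ∀ g, mul g (s g) = g
  tgt_mul : ∀ g, mul (t g) g = g
  s_inv : ∀ g, s (inv g) = t g
  t_inv : ∀ g, t (inv g) = s g
  inv_mul : ∀ g, mul (inv g) g = s g
  mul_inv : ∀ g, mul g (inv g) = t g

namespace Gpd

variable {G : Type u}

/-- `e` is an object (identity) of the groupoid. -/
def obj (𝒢 : Gpd G) (e : G) : Prop := 𝒢.s e = e

/-- The set `𝒢₀` of objects of the groupoid. -/
def Objs (𝒢 : Gpd G) : Set G := {e | 𝒢.obj e}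

end Gpd

/-- An action `α = (X_g, α_g)` of a groupoid `𝒢` on a set `X`:
`car g` is the subset `X_g` and `act g` restricts to the bijection
`α_g : X_{g⁻¹} → X_g`. -/
structure GpdSetAction {G : Type u} (𝒢 : Gpd G) (X : Type v) where
  car : G → Set X
  act : G → X → X
  car_t : ∀ g, car g = car (𝒢.t g)
  bijOn : ∀ g, Set.BijOn (act g) (car (𝒢.inv g)) (car g)
  act_id : ∀ e, 𝒢.obj e → ∀ x ∈ car e, act e x = x
  act_mul : ∀ g h, 𝒢.s g = 𝒢.t h → ∀ x ∈ car (𝒢.inv h),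
    act g (act h x) = act (𝒢.mul g h) x

/-- `X` is a split `𝒢`-set: `X` is the disjoint union of the `X_e`, `e ∈ 𝒢₀`. -/
def GpdSetAction.Split {G : Type u} {𝒢 : Gpd G} {X : Type v} (α : GpdSetAction 𝒢 X) : Prop :=
  ∀ x : X, ∃! e : G, 𝒢.obj e ∧ x ∈ α.car e

/-- The action is fully faithful: if `α_g` fixes some `x ∈ X_g ∩ X_{g⁻¹}`
then `g` is an identity. -/
def GpdSetAction.FullyFaithful {G : Type u} {𝒢 : Gpd G} {X : Type v}
    (α : GpdSetAction 𝒢 X) : Prop :=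
  ∀ g x, x ∈ α.car g ∩ α.car (𝒢.inv g) → α.act g x = x → 𝒢.obj g

/-- A `𝒢`-grading of the `k`-algebra `A`:  `A = ⊕_{g ∈ 𝒢} A_g` with
`A_g A_h ⊆ A_{gh}` for composable `g, h` and `A_g A_h = 0` otherwise. -/
structure GpdGrading {G : Type u} (𝒢 : Gpd G) (k : Type v) (A : Type w)
    [Field k] [Ring A] [Algebra k A] where
  comp : G → Submodule k A
  internal : DirectSum.IsInternal comp
  mul_mem : ∀ g h, 𝒢.s g = 𝒢.t h → ∀ a ∈ comp g, ∀ b ∈ comp h, a * b ∈ comp (𝒢.mul g h)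
  mul_eq_zero : ∀ g h, 𝒢.s g ≠ 𝒢.t h → ∀ a ∈ comp g, ∀ b ∈ comp h, a * b = 0

/-- The homogeneous component of degree `g` of `a ∈ A`. -/
noncomputable def GpdGrading.proj {G : Type u} {𝒢 : Gpd G} {k : Type v} {A : Type w}
    [Field k] [Ring A] [Algebra k A] (𝒜 : GpdGrading 𝒢 k A) (g : G) (a : A) : A :=
  ((Equiv.ofBijective _ 𝒜.internal).symm a g : A)

/-- `one : G → A` is a family of local units for the grading: each `one e`
(`e ∈ 𝒢₀`) is an identity element of `A_e` and `1_A = Σ_{e ∈ 𝒢₀} 1_e`. -/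
def IsIdFamily {G : Type u} {𝒢 : Gpd G} {k : Type v} {A : Type w}
    [Field k] [Ring A] [Algebra k A] (𝒜 : GpdGrading 𝒢 k A) (one : G → A) : Prop :=
  (∀ e, 𝒢.obj e → one e ∈ 𝒜.comp e ∧ ∀ a ∈ 𝒜.comp e, one e * a = a ∧ a * one e = a) ∧
  (1 : A) = ∑ᶠ e ∈ 𝒢.Objs, one e

/-- The multiplication of the smash product `A #_α^𝒢 X`, defined on the
ambient space of formal sums `Σ a_{(g,x)} δ_{(g,x)}`:
`(a δ_{(g,x)}) (b δ_{(h,y)}) = (a b) δ_{(gh, y)}` when `d(g) = r(h)` and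
`α_h(y) = x`, and `0` otherwise. -/
noncomputable def smashMul {G : Type u} {𝒢 : Gpd G} {X : Type v} {A : Type w} [Ring A]
    (α : GpdSetAction 𝒢 X) (f₁ f₂ : (G × X) →₀ A) : (G × X) →₀ A :=
  f₁.sum fun p a => f₂.sum fun q b =>
    if 𝒢.s p.1 = 𝒢.t q.1 ∧ α.act q.1 q.2 = p.2
    then Finsupp.single (𝒢.mul p.1 q.1, q.2) (a * b) else 0

/-- The underlying set of the smash product `A #_α^𝒢 X = ⊕_{g} ⊕_{x ∈ X_{d(g)}} A_g δ_x`: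
those formal sums whose `(g,x)`-coefficient lies in `A_g`, supported on pairs
with `x ∈ X_{d(g)}`. -/
def smashSet {G : Type u} {𝒢 : Gpd G} {X : Type v} {k : Type*} {A : Type w}
    [Field k] [Ring A] [Algebra k A]
    (α : GpdSetAction 𝒢 X) (𝒜 : GpdGrading 𝒢 k A) : Set ((G × X) →₀ A) :=
  {f | ∀ p : G × X, f p ∈ 𝒜.comp p.1 ∧ (f p ≠ 0 → p.2 ∈ α.car (𝒢.s p.1))}

/-- The identity element `Σ_{e ∈ 𝒢₀} Σ_{x ∈ X_e} 1_e δ_x` of the smash product. -/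
noncomputable def smashOne {G : Type u} {𝒢 : Gpd G} {X : Type v} {A : Type w} [Ring A]
    (α : GpdSetAction 𝒢 X) (one : G → A) : (G × X) →₀ A :=
  ∑ᶠ e ∈ 𝒢.Objs, ∑ᶠ x ∈ α.car e, Finsupp.single ((e, x) : G × X) (one e)

/-- `X` is a `(𝒢_α, 𝒦_β)`-set:  each `Y_k` is `α`-invariant, each `X_g` is
`β`-invariant, and the two actions commute. -/
structure GKCompat {G : Type u} {K : Type*} {𝒢 : Gpd G} {𝒦 : Gpd K} {X : Type v}
    (α : GpdSetAction 𝒢 X) (β : GpdSetAction 𝒦 X) : Prop where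
  alpha_inv : ∀ g κ, α.act g '' (α.car (𝒢.inv g) ∩ β.car κ) ⊆ α.car g ∩ β.car κ
  beta_inv : ∀ g κ, β.act κ '' (α.car g ∩ β.car (𝒦.inv κ)) ⊆ α.car g ∩ β.car κ
  comm : ∀ g κ x, x ∈ α.car (𝒢.inv g) ∩ β.car (𝒦.inv κ) →
    α.act g (β.act κ x) = β.act κ (α.act g x)

/-- The ideal `E_k = A #^𝒢_{θ^k} Y_k = ⊕_g ⊕_{x ∈ Y_k ∩ X_{d(g)}} A_g δ_x`
of the smash product `A #_α^𝒢 X`. -/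
def Eset {G : Type u} {K : Type*} {𝒢 : Gpd G} {𝒦 : Gpd K} {X : Type v}
    {k : Type*} {A : Type w} [Field k] [Ring A] [Algebra k A]
    (α : GpdSetAction 𝒢 X) (β : GpdSetAction 𝒦 X) (𝒜 : GpdGrading 𝒢 k A)
    (κ : K) : Set ((G × X) →₀ A) :=
  {f | f ∈ smashSet α 𝒜 ∧ ∀ p : G × X, f p ≠ 0 → p.2 ∈ β.car κ}

/-- The map `γ_k : E_{k⁻¹} → E_k`, `γ_k(a_g δ_y) = a_g δ_{β_k(y)}`. -/
noncomputable def gammaAct {G : Type u} {K : Type*} {𝒦 : Gpd K} {X : Type v} {A : Type w}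
    [Ring A] (β : GpdSetAction 𝒦 X) (κ : K) (f : (G × X) →₀ A) : (G × X) →₀ A :=
  f.sum fun p a =>
    if p.2 ∈ β.car (𝒦.inv κ) then Finsupp.single ((p.1, β.act κ p.2) : G × X) a else 0

/-- The identity element `𝟏_k = Σ_{e ∈ 𝒢₀} Σ_{x ∈ Y_k ∩ X_e} 1_e δ_x` of `E_k`. -/
noncomputable def OneE {G : Type u} {K : Type*} {𝒢 : Gpd G} {𝒦 : Gpd K} {X : Type v}
    {A : Type w} [Ring A]
    (α : GpdSetAction 𝒢 X) (β : GpdSetAction 𝒦 X) (one : G → A) (κ : K) : (G × X) →₀ A :=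
  ∑ᶠ e ∈ 𝒢.Objs, ∑ᶠ x ∈ (β.car κ ∩ α.car e), Finsupp.single ((e, x) : G × X) (one e)

/-- The `𝒦`-orbit `o(x) = {β_k(x) : k ∈ D_p}` of `x ∈ Y_p`. -/
def orbit {K : Type*} {𝒦 : Gpd K} {X : Type v} (β : GpdSetAction 𝒦 X) (x : X) : Set X :=
  {y | ∃ κ, x ∈ β.car (𝒦.inv κ) ∧ β.act κ x = y}

/-- The set `O^𝒦` of `𝒦`-orbits of `X`. -/
abbrev OrbT {K : Type*} {𝒦 : Gpd K} {X : Type v} (β : GpdSetAction 𝒦 X) : Type v :=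
  {o : Set X // ∃ x, orbit β x = o}

/-- The orbit map `φ : X → O^𝒦`, `φ(x) = o(x)`. -/
def orbMap {K : Type*} {𝒦 : Gpd K} {X : Type v} (β : GpdSetAction 𝒦 X) (x : X) : OrbT β :=
  ⟨orbit β x, ⟨x, rfl⟩⟩

/-- The monomorphism `φ* : A #_λ^𝒢 O^𝒦 → A #_α^𝒢 X` induced by the orbit map,
`φ*(a_g δ_{o(x)}) = Σ_{y ∈ X_{d(g)}, o(y) = o(x)} a_g δ_y`. -/
noncomputable def phiStar {G : Type u} {K : Type*} {𝒢 : Gpd G} {𝒦 : Gpd K} {X : Type v}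
    {A : Type w} [Ring A] (α : GpdSetAction 𝒢 X) (β : GpdSetAction 𝒦 X)
    (f : (G × OrbT β) →₀ A) : (G × X) →₀ A :=
  f.sum fun p a =>
    ∑ᶠ y ∈ {y | y ∈ α.car (𝒢.s p.1) ∧ orbit β y = (p.2 : Set X)},
      Finsupp.single ((p.1, y) : G × X) a

/-- The subalgebra of invariants `(A #_α^𝒢 X)^γ`:  all `b` in the smash
product with `γ_k(b 𝟏_{k⁻¹}) = b 𝟏_k` for every `k ∈ 𝒦`. -/
noncomputable def invariantSet {G : Type u} {K : Type*} {𝒢 : Gpd G} {𝒦 : Gpd K} {X : Type v}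
    {k : Type*} {A : Type w} [Field k] [Ring A] [Algebra k A]
    (α : GpdSetAction 𝒢 X) (β : GpdSetAction 𝒦 X) (𝒜 : GpdGrading 𝒢 k A)
    (one : G → A) : Set ((G × X) →₀ A) :=
  {f | f ∈ smashSet α 𝒜 ∧ ∀ κ : K,
    gammaAct β κ (smashMul α f (OneE α β one (𝒦.inv κ))) = smashMul α f (OneE α β one κ)}

section AuxBasics

variable {G : Type u} {K : Type u₂} {X : Type v}

lemma Gpd.obj_s (𝒢 : Gpd G) (g : G) : 𝒢.obj (𝒢.s g) := 𝒢.s_s g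
lemma Gpd.obj_t (𝒢 : Gpd G) (g : G) : 𝒢.obj (𝒢.t g) := 𝒢.s_t g

lemma Gpd.t_obj (𝒢 : Gpd G) {e : G} (he : 𝒢.obj e) : 𝒢.t e = e := by
  have he' : 𝒢.s e = e := he
  have h := 𝒢.t_s e
  rwa [he'] at h

lemma finsum_mem_eq_sum' {α : Type u₃} {M : Type u₄} [AddCommMonoid M] (f : α → M)
    {S : Set α} (hS : S.Finite) : ∑ᶠ i ∈ S, f i = ∑ i ∈ hS.toFinset, f i := by
  rw [← finsum_mem_coe_finset, Set.Finite.coe_toFinset]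

namespace GpdSetAction

variable {𝒢 : Gpd G} (α : GpdSetAction 𝒢 X)

lemma car_inv (g : G) : α.car (𝒢.inv g) = α.car (𝒢.s g) := by
  rw [α.car_t (𝒢.inv g), 𝒢.t_inv, α.car_t (𝒢.s g), 𝒢.t_s]

lemma car_inv_inv (g : G) : α.car (𝒢.inv (𝒢.inv g)) = α.car g := by
  rw [α.car_inv, 𝒢.s_inv, ← α.car_t]

lemma act_mem {g : G} {x : X} (hx : x ∈ α.car (𝒢.inv g)) : α.act g x ∈ α.car g :=
  (α.bijOn g).mapsTo hx

lemma split_obj_unique {h : α.Split} {e e' : G} {x : X}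
    (he : 𝒢.obj e) (hx : x ∈ α.car e) (he' : 𝒢.obj e') (hx' : x ∈ α.car e') : e = e' := by
  obtain ⟨f, -, hu⟩ := h x
  rw [hu e ⟨he, hx⟩, hu e' ⟨he', hx'⟩]

lemma act_inv_act {g : G} {x : X} (hx : x ∈ α.car (𝒢.inv g)) :
    α.act (𝒢.inv g) (α.act g x) = x := by
  have hx' : x ∈ α.car (𝒢.s g) := by rwa [← α.car_inv]
  rw [α.act_mul (𝒢.inv g) g (𝒢.s_inv g) x hx, 𝒢.inv_mul,
    α.act_id _ (𝒢.obj_s g) x hx']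

lemma act_act_inv {g : G} {z : X} (hz : z ∈ α.car g) :
    α.act g (α.act (𝒢.inv g) z) = z := by
  have hz' : z ∈ α.car (𝒢.inv (𝒢.inv g)) := by rwa [α.car_inv_inv]
  have hz'' : z ∈ α.car (𝒢.t g) := by rwa [← α.car_t]
  rw [α.act_mul g (𝒢.inv g) (𝒢.t_inv g).symm z hz', 𝒢.mul_inv,
    α.act_id _ (𝒢.obj_t g) z hz'']

end GpdSetAction

section Orbit

variable {𝒦 : Gpd K} {β : GpdSetAction 𝒦 X}

lemma mem_orbit_self (hs : β.Split) (x : X) : x ∈ orbit β x := by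
  obtain ⟨e, ⟨he, hx⟩, -⟩ := hs x
  have he' : 𝒦.s e = e := he
  refine ⟨e, ?_, β.act_id e he x hx⟩
  rwa [β.car_inv, he']

lemma orbit_act (hs : β.Split) {κ : K} {x : X} (hx : x ∈ β.car (𝒦.inv κ)) :
    orbit β (β.act κ x) = orbit β x := by
  ext z
  constructor
  · rintro ⟨κ', hm, rfl⟩
    have h1 : β.act κ x ∈ β.car (𝒦.s κ') := by rwa [← β.car_inv]
    have h2 : β.act κ x ∈ β.car (𝒦.t κ) := by rw [← β.car_t]; exact β.act_mem hx
    have hcomp : 𝒦.s κ' = 𝒦.t κ :=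
      β.split_obj_unique (h := hs) (𝒦.obj_s κ') h1 (𝒦.obj_t κ) h2
    refine ⟨𝒦.mul κ' κ, ?_, (β.act_mul κ' κ hcomp x hx).symm⟩
    rw [β.car_inv, 𝒦.s_mul _ _ hcomp, ← β.car_inv]
    exact hx
  · rintro ⟨κ'', hm, rfl⟩
    have hxs : x ∈ β.car (𝒦.s κ'') := by rwa [← β.car_inv]
    have hxκ : x ∈ β.car (𝒦.s κ) := by rwa [← β.car_inv]
    have hcomp : 𝒦.s κ'' = 𝒦.s κ :=
      β.split_obj_unique (h := hs) (𝒦.obj_s κ'') hxs (𝒦.obj_s κ) hxκ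
    have hcc : 𝒦.s κ'' = 𝒦.t (𝒦.inv κ) := by rw [𝒦.t_inv, hcomp]
    have hmem : β.act κ x ∈ β.car (𝒦.inv (𝒦.inv κ)) := by
      rw [β.car_inv_inv]; exact β.act_mem hx
    refine ⟨𝒦.mul κ'' (𝒦.inv κ), ?_, ?_⟩
    · rw [β.car_inv, 𝒦.s_mul _ _ hcc, 𝒦.s_inv, ← β.car_t]
      exact β.act_mem hx
    · rw [← β.act_mul κ'' (𝒦.inv κ) hcc _ hmem, β.act_inv_act hx]
end Orbit

end AuxBasics
section AuxFinsupp

variable {G : Type u} {K : Type u₂} {X : Type v} {A : Type w} [Ring A]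
variable {𝒢 : Gpd G} {𝒦 : Gpd K}

/-! ### smashMul -/

lemma smashMul_zero_left (α : GpdSetAction 𝒢 X) (h : (G × X) →₀ A) :
    smashMul α 0 h = 0 := Finsupp.sum_zero_index

lemma smashMul_zero_right (α : GpdSetAction 𝒢 X) (f : (G × X) →₀ A) :
    smashMul α f 0 = 0 := by
  unfold smashMul
  simp [Finsupp.sum_zero_index, Finsupp.sum, Finset.sum_const_zero]

lemma smashMul_add_left (α : GpdSetAction 𝒢 X) (f₁ f₂ h : (G × X) →₀ A) :
    smashMul α (f₁ + f₂) h = smashMul α f₁ h + smashMul α f₂ h := by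
  unfold smashMul
  apply Finsupp.sum_add_index
  · intro p _
    simp
  · intro p _ a₁ a₂
    rw [← Finsupp.sum_add]
    apply Finsupp.sum_congr
    intro q _
    split_ifs with h'
    · rw [add_mul, Finsupp.single_add]
    · rw [add_zero]

lemma smashMul_add_right (α : GpdSetAction 𝒢 X) (f h₁ h₂ : (G × X) →₀ A) :
    smashMul α f (h₁ + h₂) = smashMul α f h₁ + smashMul α f h₂ := by
  unfold smashMul
  rw [← Finsupp.sum_add]
  apply Finsupp.sum_congr
  intro p _
  apply Finsupp.sum_add_index
  · intro q _; simp
  · intro q _ b₁ b₂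
    split_ifs with h'
    · rw [mul_add, Finsupp.single_add]
    · rw [add_zero]

lemma smashMul_sum_left (α : GpdSetAction 𝒢 X) {ι : Type u₃} (s : Finset ι)
    (f : ι → (G × X) →₀ A) (h : (G × X) →₀ A) :
    smashMul α (∑ i ∈ s, f i) h = ∑ i ∈ s, smashMul α (f i) h := by
  induction s using Finset.cons_induction with
  | empty => simp [smashMul_zero_left]
  | cons i s hi ih => rw [Finset.sum_cons, smashMul_add_left, ih, Finset.sum_cons]

lemma smashMul_sum_right (α : GpdSetAction 𝒢 X) {ι : Type u₃} (s : Finset ι)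
    (f : (G × X) →₀ A) (h : ι → (G × X) →₀ A) :
    smashMul α f (∑ i ∈ s, h i) = ∑ i ∈ s, smashMul α f (h i) := by
  induction s using Finset.cons_induction with
  | empty => simp [smashMul_zero_right]
  | cons i s hi ih => rw [Finset.sum_cons, smashMul_add_right, ih, Finset.sum_cons]

lemma smashMul_single_single (α : GpdSetAction 𝒢 X) (p q : G × X) (a b : A) :
    smashMul α (Finsupp.single p a) (Finsupp.single q b) =
      if 𝒢.s p.1 = 𝒢.t q.1 ∧ α.act q.1 q.2 = p.2
      then Finsupp.single ((𝒢.mul p.1 q.1, q.2) : G × X) (a * b) else 0 := by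
  unfold smashMul
  rw [Finsupp.sum_single_index, Finsupp.sum_single_index]
  · split_ifs with h' <;> simp
  · simp

/-! ### gammaAct -/

lemma gammaAct_zero (β : GpdSetAction 𝒦 X) (κ : K) :
    gammaAct β κ (0 : (G × X) →₀ A) = 0 := Finsupp.sum_zero_index

lemma gammaAct_add (β : GpdSetAction 𝒦 X) (κ : K) (f₁ f₂ : (G × X) →₀ A) :
    gammaAct β κ (f₁ + f₂) = gammaAct β κ f₁ + gammaAct β κ f₂ := by
  unfold gammaAct
  apply Finsupp.sum_add_index
  · intro p _; split_ifs <;> simp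
  · intro p _ b₁ b₂; split_ifs <;> simp [Finsupp.single_add]

lemma gammaAct_single (β : GpdSetAction 𝒦 X) (κ : K) (p : G × X) (a : A) :
    gammaAct β κ (Finsupp.single p a) =
      if p.2 ∈ β.car (𝒦.inv κ) then Finsupp.single ((p.1, β.act κ p.2) : G × X) a else 0 :=
  Finsupp.sum_single_index (by split_ifs <;> simp)

lemma gammaAct_sum (β : GpdSetAction 𝒦 X) (κ : K) {ι : Type u₃} (s : Finset ι)
    (F : ι → (G × X) →₀ A) :
    gammaAct β κ (∑ i ∈ s, F i) = ∑ i ∈ s, gammaAct β κ (F i) := by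
  induction s using Finset.cons_induction with
  | empty => simp [gammaAct_zero]
  | cons i s hi ih => rw [Finset.sum_cons, gammaAct_add, ih, Finset.sum_cons]

lemma gammaAct_apply_act (β : GpdSetAction 𝒦 X) (κ : K) (H : (G × X) →₀ A) (g : G)
    {x : X} (hx : x ∈ β.car (𝒦.inv κ)) :
    gammaAct β κ H (g, β.act κ x) = H (g, x) := by
  unfold gammaAct
  rw [Finsupp.sum_apply, Finsupp.sum, Finset.sum_eq_single ((g, x) : G × X)]
  · rw [if_pos hx, Finsupp.single_apply, if_pos rfl]
  · intro p hp hne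
    split_ifs with h
    · rw [Finsupp.single_apply, if_neg]
      intro he
      apply hne
      have h1 : p.1 = g := congrArg Prod.fst he
      have h2 : β.act κ p.2 = β.act κ x := congrArg Prod.snd he
      exact Prod.ext h1 ((β.bijOn κ).injOn h hx h2)
    · rfl
  · intro hns
    rw [Finsupp.notMem_support_iff] at hns
    rw [hns]
    split_ifs <;> simp

/-! ### filter sums -/

lemma filter_finset_sum {ι : Type u₃} (P : (G × X) → Prop) (s : Finset ι)
    (F : ι → (G × X) →₀ A) :
    Finsupp.filter P (∑ i ∈ s, F i) = ∑ i ∈ s, Finsupp.filter P (F i) := by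
  induction s using Finset.cons_induction with
  | empty => simp [Finsupp.filter_zero]
  | cons i s hi ih => rw [Finset.sum_cons, Finsupp.filter_add, ih, Finset.sum_cons]

end AuxFinsupp
section AuxPhiStar

variable {G : Type u} {K : Type u₂} {X : Type v} {A : Type w} [Ring A] [Finite X]
variable {𝒢 : Gpd G} {𝒦 : Gpd K}

lemma phiStar_zero (α : GpdSetAction 𝒢 X) (β : GpdSetAction 𝒦 X) :
    phiStar α β (0 : (G × OrbT β) →₀ A) = 0 := Finsupp.sum_zero_index

lemma phiStar_single (α : GpdSetAction 𝒢 X) (β : GpdSetAction 𝒦 X)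
    (p : G × OrbT β) (a : A) :
    phiStar α β (Finsupp.single p a) =
      ∑ y ∈ (Set.toFinite {y | y ∈ α.car (𝒢.s p.1) ∧ orbit β y = (p.2 : Set X)}).toFinset,
        Finsupp.single ((p.1, y) : G × X) a := by
  unfold phiStar
  rw [Finsupp.sum_single_index]
  · rw [finsum_mem_eq_sum' _ (Set.toFinite _)]
  · rw [finsum_mem_eq_sum' _ (Set.toFinite _)]
    simp

lemma phiStar_apply (α : GpdSetAction 𝒢 X) (β : GpdSetAction 𝒦 X)
    (f : (G × OrbT β) →₀ A) (g : G) (x : X) :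
    phiStar α β f (g, x) = if x ∈ α.car (𝒢.s g) then f (g, orbMap β x) else 0 := by
  unfold phiStar
  rw [Finsupp.sum_apply, Finsupp.sum]
  have hterm : ∀ p ∈ f.support,
      ((∑ᶠ y ∈ {y | y ∈ α.car (𝒢.s p.1) ∧ orbit β y = (p.2 : Set X)},
        Finsupp.single ((p.1, y) : G × X) (f p)) : (G × X) →₀ A) (g, x)
      = if p = (g, orbMap β x) ∧ x ∈ α.car (𝒢.s g) then f p else 0 := by
    intro p _
    rw [finsum_mem_eq_sum' _ (Set.toFinite _), Finset.sum_apply']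
    by_cases hp : p = (g, orbMap β x) ∧ x ∈ α.car (𝒢.s g)
    · obtain ⟨rfl, hx⟩ := hp
      rw [if_pos ⟨rfl, hx⟩, Finset.sum_eq_single x]
      · simp
      · intro y hy hne
        rw [Finsupp.single_apply, if_neg]
        intro he
        exact hne (congrArg Prod.snd he)
      · intro hx'
        refine absurd ?_ hx'
        rw [(Set.toFinite _).mem_toFinset]
        exact ⟨hx, rfl⟩
    · rw [if_neg hp]
      apply Finset.sum_eq_zero
      intro y hy
      rw [(Set.toFinite _).mem_toFinset] at hy
      rw [Finsupp.single_apply, if_neg]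
      intro he
      have h1 : p.1 = g := congrArg Prod.fst he
      have h2 : y = x := congrArg Prod.snd he
      apply hp
      subst h2
      refine ⟨Prod.ext h1 (Subtype.ext hy.2.symm), ?_⟩
      rw [← h1]
      exact hy.1
  rw [Finset.sum_congr rfl hterm]
  by_cases hx : x ∈ α.car (𝒢.s g)
  · simp only [hx, and_true, if_pos]
    rw [Finset.sum_ite_eq' f.support ((g, orbMap β x) : G × OrbT β) (fun p => f p)]
    split_ifs with h
    · rfl
    · exact (Finsupp.notMem_support_iff.1 h).symm
  · simp [hx]

lemma phiStar_add (α : GpdSetAction 𝒢 X) (β : GpdSetAction 𝒦 X)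
    (f₁ f₂ : (G × OrbT β) →₀ A) :
    phiStar α β (f₁ + f₂) = phiStar α β f₁ + phiStar α β f₂ := by
  ext q
  obtain ⟨g, x⟩ := q
  rw [Finsupp.add_apply, phiStar_apply, phiStar_apply, phiStar_apply, Finsupp.add_apply]
  split_ifs <;> simp

lemma phiStar_smul {k : Type u₃} [Field k] [Algebra k A]
    (α : GpdSetAction 𝒢 X) (β : GpdSetAction 𝒦 X) (c : k)
    (f : (G × OrbT β) →₀ A) :
    phiStar α β (c • f) = c • phiStar α β f := by
  ext q
  obtain ⟨g, x⟩ := q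
  rw [Finsupp.smul_apply, phiStar_apply, phiStar_apply, Finsupp.smul_apply]
  split_ifs <;> simp

end AuxPhiStar
section AuxOneE

variable {G : Type u} {K : Type u₂} {X : Type v} {k : Type u₃} {A : Type w}
variable [Field k] [Ring A] [Algebra k A] [Finite X]
variable {𝒢 : Gpd G} {𝒦 : Gpd K}

lemma mul_one_src (hG₀ : 𝒢.Objs.Finite) (𝒜 : GpdGrading 𝒢 k A) {one : G → A}
    (hone : IsIdFamily 𝒜 one) {g : G} {a : A} (ha : a ∈ 𝒜.comp g) :
    a * one (𝒢.s g) = a := by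
  have h1 : (1 : A) = ∑ e ∈ hG₀.toFinset, one e := by
    rw [hone.2, finsum_mem_eq_sum' _ hG₀]
  have h2 : a = ∑ e ∈ hG₀.toFinset, a * one e := by
    rw [← Finset.mul_sum, ← h1, mul_one]
  have h3 : ∑ e ∈ hG₀.toFinset, a * one e = a * one (𝒢.s g) := by
    apply Finset.sum_eq_single
    · intro e he hne
      rw [hG₀.mem_toFinset] at he
      apply 𝒜.mul_eq_zero g e _ a ha (one e) ((hone.1 e he).1)
      rw [𝒢.t_obj he]
      exact fun hh => hne hh.symm
    · intro hns
      exact absurd (hG₀.mem_toFinset.2 (𝒢.obj_s g)) hns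
  rw [← h3, ← h2]

lemma OneE_eq (hG₀ : 𝒢.Objs.Finite) (α : GpdSetAction 𝒢 X) (β : GpdSetAction 𝒦 X)
    (one : G → A) (κ : K) :
    OneE α β one κ = ∑ e ∈ hG₀.toFinset,
      ∑ x ∈ (Set.toFinite (β.car κ ∩ α.car e)).toFinset,
        Finsupp.single ((e, x) : G × X) (one e) := by
  rw [OneE, finsum_mem_eq_sum' _ hG₀]
  exact Finset.sum_congr rfl fun e _ => finsum_mem_eq_sum' _ _

lemma smashMul_single_OneE (hG₀ : 𝒢.Objs.Finite) (𝒜 : GpdGrading 𝒢 k A)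
    (α : GpdSetAction 𝒢 X) (β : GpdSetAction 𝒦 X) {one : G → A}
    (hone : IsIdFamily 𝒜 one) {g : G} {x : X} {a : A} (ha : a ∈ 𝒜.comp g)
    (hsupp : a ≠ 0 → x ∈ α.car (𝒢.s g)) (κ : K) :
    smashMul α (Finsupp.single ((g, x) : G × X) a) (OneE α β one κ) =
      if x ∈ β.car κ then Finsupp.single ((g, x) : G × X) a else 0 := by
  by_cases ha0 : a = 0
  · subst ha0
    rw [Finsupp.single_zero, smashMul_zero_left]
    split_ifs <;> simp
  have hx : x ∈ α.car (𝒢.s g) := hsupp ha0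
  rw [OneE_eq hG₀, smashMul_sum_right]
  have houter : ∀ e ∈ hG₀.toFinset,
      smashMul α (Finsupp.single ((g, x) : G × X) a)
        (∑ y ∈ (Set.toFinite (β.car κ ∩ α.car e)).toFinset,
          Finsupp.single ((e, y) : G × X) (one e))
      = if e = 𝒢.s g ∧ x ∈ β.car κ then Finsupp.single ((g, x) : G × X) a else 0 := by
    intro e he
    rw [hG₀.mem_toFinset] at he
    rw [smashMul_sum_right]
    by_cases heg : e = 𝒢.s g
    · have hterm : ∀ y ∈ (Set.toFinite (β.car κ ∩ α.car e)).toFinset,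
          smashMul α (Finsupp.single ((g, x) : G × X) a)
            (Finsupp.single ((e, y) : G × X) (one e))
          = if y = x then Finsupp.single ((g, x) : G × X) a else 0 := by
        intro y hy
        rw [(Set.toFinite _).mem_toFinset] at hy
        rw [smashMul_single_single]
        have hact : α.act e y = y := α.act_id e he y hy.2
        have hcond1 : 𝒢.s g = 𝒢.t e := by rw [𝒢.t_obj he]; exact heg.symm
        by_cases hyx : y = x
        · subst hyx
          rw [if_pos ⟨hcond1, hact⟩, if_pos rfl]
          have h1 : 𝒢.mul g e = g := by rw [heg, 𝒢.mul_src]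
          have h2 : a * one e = a := by rw [heg]; exact mul_one_src hG₀ 𝒜 hone ha
          rw [h1, h2]
        · rw [if_neg, if_neg hyx]
          rintro ⟨-, h2⟩
          rw [hact] at h2
          exact hyx h2
      rw [Finset.sum_congr rfl hterm, Finset.sum_ite_eq' _ x]
      by_cases hxκ : x ∈ β.car κ
      · rw [if_pos ((Set.toFinite _).mem_toFinset.2 (Set.mem_inter hxκ (heg ▸ hx))), if_pos ⟨heg, hxκ⟩]
      · rw [if_neg (fun h => hxκ ((Set.toFinite _).mem_toFinset.1 h).1),
          if_neg (fun h => hxκ h.2)]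
    · rw [if_neg (fun h => heg h.1)]
      apply Finset.sum_eq_zero
      intro y hy
      rw [smashMul_single_single, if_neg]
      rintro ⟨h1, -⟩
      rw [𝒢.t_obj he] at h1
      exact heg h1.symm
  rw [Finset.sum_congr rfl houter]
  have hgs : 𝒢.s g ∈ hG₀.toFinset := hG₀.mem_toFinset.2 (𝒢.obj_s g)
  by_cases hxκ : x ∈ β.car κ
  · simp only [hxκ, and_true, if_true]
    rw [Finset.sum_ite_eq' _ (𝒢.s g), if_pos hgs]
  · simp only [hxκ, and_false, if_false, Finset.sum_const_zero]

lemma smashMul_OneE (hG₀ : 𝒢.Objs.Finite) (𝒜 : GpdGrading 𝒢 k A)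
    (α : GpdSetAction 𝒢 X) (β : GpdSetAction 𝒦 X) {one : G → A}
    (hone : IsIdFamily 𝒜 one) {F : (G × X) →₀ A} (hF : F ∈ smashSet α 𝒜) (κ : K) :
    smashMul α F (OneE α β one κ) =
      Finsupp.filter (fun p : G × X => p.2 ∈ β.car κ) F := by
  conv_lhs => rw [← Finsupp.sum_single F, Finsupp.sum]
  conv_rhs => rw [← Finsupp.sum_single F, Finsupp.sum]
  rw [smashMul_sum_left, filter_finset_sum]
  apply Finset.sum_congr rfl
  intro p hp
  have hps : (Finsupp.single p (F p) : (G × X) →₀ A)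
      = Finsupp.single ((p.1, p.2) : G × X) (F p) := by rw [Prod.mk.eta]
  rw [hps, smashMul_single_OneE hG₀ 𝒜 α β hone (hF p).1 (hF p).2 κ, ← hps]
  by_cases hpκ : p.2 ∈ β.car κ
  · rw [if_pos hpκ, Finsupp.filter_single_of_pos (fun q : G × X => q.2 ∈ β.car κ) hpκ]
  · rw [if_neg hpκ, Finsupp.filter_single_of_neg (fun q : G × X => q.2 ∈ β.car κ) hpκ]

end AuxOneE
section AuxInvar

variable {G : Type u} {K : Type u₂} {X : Type v} {A : Type w} [Ring A] [Finite X]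
variable {𝒢 : Gpd G} {𝒦 : Gpd K}

lemma invar_phiStar_single (α : GpdSetAction 𝒢 X) (β : GpdSetAction 𝒦 X)
    (hsβ : β.Split) (hc : GKCompat α β) (κ : K) (p : G × OrbT β) (a : A) :
    gammaAct β κ (Finsupp.filter (fun r : G × X => r.2 ∈ β.car (𝒦.inv κ))
        (phiStar α β (Finsupp.single p a)))
      = Finsupp.filter (fun r : G × X => r.2 ∈ β.car κ)
          (phiStar α β (Finsupp.single p a)) := by
  rw [phiStar_single, filter_finset_sum, filter_finset_sum, gammaAct_sum]
  have hL : ∀ y : X,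
      gammaAct β κ (Finsupp.filter (fun r : G × X => r.2 ∈ β.car (𝒦.inv κ))
        (Finsupp.single ((p.1, y) : G × X) a))
      = if y ∈ β.car (𝒦.inv κ) then Finsupp.single ((p.1, β.act κ y) : G × X) a else 0 := by
    intro y
    by_cases hy : y ∈ β.car (𝒦.inv κ)
    · rw [Finsupp.filter_single_of_pos (fun r : G × X => r.2 ∈ β.car (𝒦.inv κ)) hy,
        gammaAct_single]
    · rw [Finsupp.filter_single_of_neg (fun r : G × X => r.2 ∈ β.car (𝒦.inv κ)) hy,
        gammaAct_zero]
      simp [hy]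
  have hR : ∀ y : X,
      Finsupp.filter (fun r : G × X => r.2 ∈ β.car κ) (Finsupp.single ((p.1, y) : G × X) a)
      = if y ∈ β.car κ then Finsupp.single ((p.1, y) : G × X) a else 0 := by
    intro y
    by_cases hy : y ∈ β.car κ
    · rw [Finsupp.filter_single_of_pos (fun r : G × X => r.2 ∈ β.car κ) hy]
      simp [hy]
    · rw [Finsupp.filter_single_of_neg (fun r : G × X => r.2 ∈ β.car κ) hy]
      simp [hy]
  rw [Finset.sum_congr rfl (fun y _ => hL y), Finset.sum_congr rfl (fun y _ => hR y)]
  rw [← Finset.sum_filter, ← Finset.sum_filter]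
  apply Finset.sum_nbij' (i := fun y => β.act κ y) (j := fun z => β.act (𝒦.inv κ) z)
  · intro y hy
    rw [Finset.mem_filter, (Set.toFinite _).mem_toFinset] at hy
    rw [Finset.mem_filter, (Set.toFinite _).mem_toFinset]
    obtain ⟨⟨hy1, hy2⟩, hyinv⟩ := hy
    have him := hc.beta_inv (𝒢.s p.1) κ
      (Set.mem_image_of_mem _ (Set.mem_inter hy1 hyinv))
    exact ⟨⟨him.1, by rw [orbit_act hsβ hyinv, hy2]⟩, him.2⟩
  · intro z hz
    rw [Finset.mem_filter, (Set.toFinite _).mem_toFinset] at hz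
    rw [Finset.mem_filter, (Set.toFinite _).mem_toFinset]
    obtain ⟨⟨hz1, hz2⟩, hzκ⟩ := hz
    have hzinv : z ∈ β.car (𝒦.inv (𝒦.inv κ)) := by rwa [β.car_inv_inv]
    have him := hc.beta_inv (𝒢.s p.1) (𝒦.inv κ)
      (Set.mem_image_of_mem _ (Set.mem_inter hz1 hzinv))
    exact ⟨⟨him.1, by rw [orbit_act hsβ hzinv, hz2]⟩, him.2⟩
  · intro y hy
    rw [Finset.mem_filter] at hy
    exact β.act_inv_act hy.2
  · intro z hz
    rw [Finset.mem_filter] at hz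
    exact β.act_act_inv hz.2
  · intro y _
    rfl

lemma invar_phiStar (α : GpdSetAction 𝒢 X) (β : GpdSetAction 𝒦 X)
    (hsβ : β.Split) (hc : GKCompat α β) (κ : K) (f : (G × OrbT β) →₀ A) :
    gammaAct β κ (Finsupp.filter (fun r : G × X => r.2 ∈ β.car (𝒦.inv κ))
        (phiStar α β f))
      = Finsupp.filter (fun r : G × X => r.2 ∈ β.car κ) (phiStar α β f) := by
  induction f using Finsupp.induction_linear with
  | zero => rw [phiStar_zero, Finsupp.filter_zero, Finsupp.filter_zero, gammaAct_zero]
  | add f g hf hg =>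
      rw [phiStar_add, Finsupp.filter_add, Finsupp.filter_add, gammaAct_add, hf, hg]
  | single p a => exact invar_phiStar_single α β hsβ hc κ p a

lemma invariant_const {k : Type u₃} [Field k] [Algebra k A] (hG₀ : 𝒢.Objs.Finite)
    (𝒜 : GpdGrading 𝒢 k A) (α : GpdSetAction 𝒢 X) (β : GpdSetAction 𝒦 X)
    {one : G → A} (hone : IsIdFamily 𝒜 one) {F : (G × X) →₀ A}
    (hF : F ∈ invariantSet α β 𝒜 one) (κ : K) {x : X} (hx : x ∈ β.car (𝒦.inv κ))
    (g : G) : F (g, β.act κ x) = F (g, x) := by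
  have h := hF.2 κ
  rw [smashMul_OneE hG₀ 𝒜 α β hone hF.1, smashMul_OneE hG₀ 𝒜 α β hone hF.1] at h
  have h2 : gammaAct β κ (Finsupp.filter (fun r : G × X => r.2 ∈ β.car (𝒦.inv κ)) F)
      ((g, β.act κ x) : G × X)
      = Finsupp.filter (fun r : G × X => r.2 ∈ β.car κ) F ((g, β.act κ x) : G × X) := by
    rw [h]
  rw [gammaAct_apply_act β κ _ g hx, Finsupp.filter_apply, Finsupp.filter_apply] at h2
  rw [if_pos hx, if_pos (β.act_mem hx)] at h2
  exact h2.symm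

lemma invariant_const_orbit {k : Type u₃} [Field k] [Algebra k A] (hG₀ : 𝒢.Objs.Finite)
    (𝒜 : GpdGrading 𝒢 k A) (α : GpdSetAction 𝒢 X) (β : GpdSetAction 𝒦 X)
    (hsβ : β.Split) {one : G → A} (hone : IsIdFamily 𝒜 one) {F : (G × X) →₀ A}
    (hF : F ∈ invariantSet α β 𝒜 one) {x y : X} (hxy : orbit β y = orbit β x)
    (g : G) : F (g, y) = F (g, x) := by
  have hy : y ∈ orbit β x := hxy ▸ mem_orbit_self hsβ y
  obtain ⟨κ, hm, heq⟩ := hy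
  rw [← heq]
  exact invariant_const hG₀ 𝒜 α β hone hF κ hm g

lemma phiStar_mul_single (α : GpdSetAction 𝒢 X) (β : GpdSetAction 𝒦 X)
    (lam : GpdSetAction 𝒢 (OrbT β))
    (hlam₂ : ∀ g, ∀ x ∈ α.car (𝒢.inv g), lam.act g (orbMap β x) = orbMap β (α.act g x))
    (p q : G × OrbT β) (a b : A) :
    phiStar α β (smashMul lam (Finsupp.single p a) (Finsupp.single q b)) =
      smashMul α (phiStar α β (Finsupp.single p a)) (phiStar α β (Finsupp.single q b)) := by
  rw [smashMul_single_single, phiStar_single, phiStar_single, smashMul_sum_left]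
  rw [Finset.sum_congr rfl (fun y _ => smashMul_sum_right α _ _ _)]
  rw [Finset.sum_congr rfl (fun y _ =>
    Finset.sum_congr rfl (fun z _ => smashMul_single_single α _ _ _ _))]
  rw [Finset.sum_comm]
  dsimp only
  by_cases hst : 𝒢.s p.1 = 𝒢.t q.1
  · have hinner : ∀ z ∈ (Set.toFinite {y | y ∈ α.car (𝒢.s q.1)
        ∧ orbit β y = (q.2 : Set X)}).toFinset,
        (∑ y ∈ (Set.toFinite {y | y ∈ α.car (𝒢.s p.1)
            ∧ orbit β y = (p.2 : Set X)}).toFinset,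
          if 𝒢.s p.1 = 𝒢.t q.1 ∧ α.act q.1 z = y
          then Finsupp.single ((𝒢.mul p.1 q.1, z) : G × X) (a * b) else 0)
        = if lam.act q.1 q.2 = p.2
          then Finsupp.single ((𝒢.mul p.1 q.1, z) : G × X) (a * b) else 0 := by
      intro z hz
      rw [(Set.toFinite _).mem_toFinset] at hz
      simp only [hst, true_and]
      rw [Finset.sum_ite_eq _ (α.act q.1 z)
        (fun _ => Finsupp.single ((𝒢.mul p.1 q.1, z) : G × X) (a * b))]
      have hzinv : z ∈ α.car (𝒢.inv q.1) := by rw [α.car_inv]; exact hz.1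
      have hmemT : (α.act q.1 z ∈ α.car (𝒢.t q.1) ∧ orbit β (α.act q.1 z) = (p.2 : Set X))
          ↔ lam.act q.1 q.2 = p.2 := by
        constructor
        · rintro ⟨-, h2⟩
          have h3 : orbMap β (α.act q.1 z) = p.2 := Subtype.ext h2
          rw [← hlam₂ q.1 z hzinv] at h3
          rwa [show orbMap β z = q.2 from Subtype.ext hz.2] at h3
        · intro h
          constructor
          · have := α.act_mem hzinv
            rwa [α.car_t q.1] at this
          · have h3 : orbMap β (α.act q.1 z) = p.2 := by
              rw [← hlam₂ q.1 z hzinv, show orbMap β z = q.2 from Subtype.ext hz.2]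
              exact h
            exact congrArg Subtype.val h3
      simp only [Set.Finite.mem_toFinset, Set.mem_setOf_eq, hmemT]
    rw [Finset.sum_congr rfl hinner]
    by_cases hl : lam.act q.1 q.2 = p.2
    · rw [if_pos ⟨hst, hl⟩, phiStar_single]
      rw [Finset.sum_congr rfl (fun z _ => if_pos hl)]
      refine Finset.sum_congr ?_ (fun y _ => rfl)
      ext y
      rw [(Set.toFinite _).mem_toFinset, (Set.toFinite _).mem_toFinset]
      simp only [Set.mem_setOf_eq]
      rw [𝒢.s_mul _ _ hst]
    · rw [if_neg (fun hc' => hl hc'.2), phiStar_zero]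
      rw [Finset.sum_congr rfl (fun z _ => if_neg hl), Finset.sum_const_zero]
  · rw [if_neg (fun hc' => hst hc'.1), phiStar_zero]
    symm
    apply Finset.sum_eq_zero
    intro z _
    apply Finset.sum_eq_zero
    intro y _
    exact if_neg (fun hc' => hst hc'.1)

lemma phiStar_mul (α : GpdSetAction 𝒢 X) (β : GpdSetAction 𝒦 X)
    (lam : GpdSetAction 𝒢 (OrbT β))
    (hlam₂ : ∀ g, ∀ x ∈ α.car (𝒢.inv g), lam.act g (orbMap β x) = orbMap β (α.act g x))
    (f₁ f₂ : (G × OrbT β) →₀ A) :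
    phiStar α β (smashMul lam f₁ f₂) =
      smashMul α (phiStar α β f₁) (phiStar α β f₂) := by
  induction f₁ using Finsupp.induction_linear with
  | zero => rw [smashMul_zero_left, phiStar_zero, smashMul_zero_left]
  | add f g hf hg =>
      rw [smashMul_add_left, phiStar_add, hf, hg, phiStar_add, smashMul_add_left]
  | single p a =>
    induction f₂ using Finsupp.induction_linear with
    | zero => rw [smashMul_zero_right, phiStar_zero, smashMul_zero_right]
    | add f g hf hg =>
        rw [smashMul_add_right, phiStar_add, hf, hg, phiStar_add, smashMul_add_right]
    | single q b => exact phiStar_mul_single α β lam hlam₂ p q a b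

end AuxInvar
/-- For a finite `(𝒢_α, 𝒦_β)`-set `X` split for both
actions, the image of the monomorphism `φ* : A #_λ^𝒢 O^𝒦 → A #_α^𝒢 X`
induced by the orbit map equals the subalgebra of invariants
`(A #_α^𝒢 X)^γ`; in particular `A #_λ^𝒢 O^𝒦 ≅ (A #_α^𝒢 X)^γ` as algebras. -/
theorem phiStar_image_eq_invariants
    {G : Type u} {K : Type*} (𝒢 : Gpd G) (𝒦 : Gpd K) {X : Type v}
    (k : Type*) (A : Type w) [Field k] [Ring A] [Algebra k A] [Finite X]
    (hG₀ : 𝒢.Objs.Finite) (𝒜 : GpdGrading 𝒢 k A)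
    (α : GpdSetAction 𝒢 X) (β : GpdSetAction 𝒦 X)
    (hsplitα : α.Split) (hsplitβ : β.Split) (hc : GKCompat α β)
    (one : G → A) (hone : IsIdFamily 𝒜 one)
    -- `λ` is the induced `𝒢`-action on the orbit set `O^𝒦`
    (lam : GpdSetAction 𝒢 (OrbT β))
    (hlam₁ : ∀ g, lam.car g = {o : OrbT β | ∃ x ∈ α.car g, orbit β x = (o : Set X)})
    (hlam₂ : ∀ g, ∀ x ∈ α.car (𝒢.inv g), lam.act g (orbMap β x) = orbMap β (α.act g x)) :
    -- `φ*(A #_λ^𝒢 O^𝒦) = (A #_α^𝒢 X)^γ`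
    phiStar α β '' smashSet lam 𝒜 = invariantSet α β 𝒜 one ∧
    -- in particular `φ*` is an isomorphism of algebras onto the invariants:
    Set.InjOn (phiStar α β) (smashSet lam 𝒜) ∧
    (∀ f₁ ∈ smashSet lam 𝒜, ∀ f₂ ∈ smashSet lam 𝒜,
      phiStar α β (f₁ + f₂) = phiStar α β f₁ + phiStar α β f₂) ∧
    (∀ (c : k), ∀ f ∈ smashSet lam 𝒜, phiStar α β (c • f) = c • phiStar α β f) ∧
    (∀ f₁ ∈ smashSet lam 𝒜, ∀ f₂ ∈ smashSet lam 𝒜,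
      phiStar α β (smashMul lam f₁ f₂) = smashMul α (phiStar α β f₁) (phiStar α β f₂)) := by
  classical
  have hsub1 : ∀ f ∈ smashSet lam 𝒜, phiStar α β f ∈ smashSet α 𝒜 := by
    intro f hf p
    obtain ⟨g, x⟩ := p
    rw [phiStar_apply]
    constructor
    · split_ifs
      · exact (hf ((g, orbMap β x) : G × OrbT β)).1
      · exact (𝒜.comp g).zero_mem
    · intro hne
      by_contra hx
      rw [if_neg hx] at hne
      exact hne rfl
  have himg : ∀ f ∈ smashSet lam 𝒜, phiStar α β f ∈ invariantSet α β 𝒜 one := by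
    intro f hf
    refine ⟨hsub1 f hf, fun κ => ?_⟩
    rw [smashMul_OneE hG₀ 𝒜 α β hone (hsub1 f hf) (𝒦.inv κ),
      smashMul_OneE hG₀ 𝒜 α β hone (hsub1 f hf) κ]
    exact invar_phiStar α β hsplitβ hc κ f
  have hrev : ∀ F ∈ invariantSet α β 𝒜 one, ∃ f ∈ smashSet lam 𝒜, phiStar α β f = F := by
    intro F hF
    obtain ⟨f, hfq⟩ : ∃ f : (G × OrbT β) →₀ A, ∀ q : G × OrbT β, f q =
        if h : ∃ z, z ∈ α.car (𝒢.s q.1) ∧ orbMap β z = q.2 then F (q.1, h.choose)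
        else 0 := by
      refine ⟨Finsupp.onFinset (F.support.image fun p => ((p.1, orbMap β p.2) : G × OrbT β))
        (fun q => if h : ∃ z, z ∈ α.car (𝒢.s q.1) ∧ orbMap β z = q.2
          then F (q.1, h.choose) else 0) ?_, fun q => rfl⟩
      intro q hq
      rw [Finset.mem_image]
      by_cases h : ∃ z, z ∈ α.car (𝒢.s q.1) ∧ orbMap β z = q.2
      · refine ⟨((q.1, h.choose) : G × X), ?_, Prod.ext rfl h.choose_spec.2⟩
        rw [Finsupp.mem_support_iff]
        rwa [dif_pos h] at hq
      · rw [dif_neg h] at hq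
        exact absurd rfl hq
    have hfmem : f ∈ smashSet lam 𝒜 := by
      intro q
      constructor
      · by_cases h : ∃ z, z ∈ α.car (𝒢.s q.1) ∧ orbMap β z = q.2
        · have h1 := hfq q
          rw [dif_pos h] at h1
          rw [h1]
          exact (hF.1 ((q.1, h.choose) : G × X)).1
        · have h1 := hfq q
          rw [dif_neg h] at h1
          rw [h1]
          exact (𝒜.comp q.1).zero_mem
      · intro hne
        by_cases h : ∃ z, z ∈ α.car (𝒢.s q.1) ∧ orbMap β z = q.2
        · rw [hlam₁ (𝒢.s q.1)]
          exact ⟨h.choose, h.choose_spec.1, congrArg Subtype.val h.choose_spec.2⟩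
        · have h1 := hfq q
          rw [dif_neg h] at h1
          exact absurd h1 hne
    refine ⟨f, hfmem, ?_⟩
    ext q
    obtain ⟨g, x⟩ := q
    rw [phiStar_apply]
    by_cases hx : x ∈ α.car (𝒢.s g)
    · rw [if_pos hx]
      have h1 := hfq ((g, orbMap β x) : G × OrbT β)
      dsimp only at h1
      have h : ∃ z, z ∈ α.car (𝒢.s g) ∧ orbMap β z = orbMap β x := ⟨x, hx, rfl⟩
      rw [dif_pos h] at h1
      rw [h1]
      exact invariant_const_orbit hG₀ 𝒜 α β hsplitβ hone hF
        (congrArg Subtype.val h.choose_spec.2) g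
    · rw [if_neg hx]
      by_contra hne
      exact hx ((hF.1 ((g, x) : G × X)).2 fun h0 => hne h0.symm)
  have hinj : Set.InjOn (phiStar α β) (smashSet lam 𝒜) := by
    intro f₁ h₁ f₂ h₂ heq
    ext q
    by_cases h0 : f₁ q = 0 ∧ f₂ q = 0
    · rw [h0.1, h0.2]
    have hkey : ∀ f ∈ smashSet lam 𝒜, f q ≠ 0 →
        ∃ x, x ∈ α.car (𝒢.s q.1) ∧ orbMap β x = q.2 := by
      intro f hf hne
      have hmem := (hf q).2 hne
      rw [hlam₁ (𝒢.s q.1)] at hmem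
      obtain ⟨x, hx, horb⟩ := hmem
      exact ⟨x, hx, Subtype.ext horb⟩
    have hx : ∃ x, x ∈ α.car (𝒢.s q.1) ∧ orbMap β x = q.2 := by
      rcases Classical.em (f₁ q = 0) with h1 | h1
      · exact hkey f₂ h₂ fun h2 => h0 ⟨h1, h2⟩
      · exact hkey f₁ h₁ h1
    obtain ⟨x, hxc, hxo⟩ := hx
    have e1 := phiStar_apply α β f₁ q.1 x
    have e2 := phiStar_apply α β f₂ q.1 x
    rw [heq] at e1
    rw [if_pos hxc, hxo] at e1 e2
    have hq : f₁ (q.1, q.2) = f₂ (q.1, q.2) := by rw [← e1, e2]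
    rwa [Prod.mk.eta] at hq
  refine ⟨?_, hinj, ?_, ?_, ?_⟩
  · ext F
    constructor
    · rintro ⟨f, hf, rfl⟩
      exact himg f hf
    · intro hF
      obtain ⟨f, hf, hphi⟩ := hrev F hF
      exact ⟨f, hf, hphi⟩
  · exact fun f₁ _ f₂ _ => phiStar_add α β f₁ f₂
  · exact fun c f _ => phiStar_smul α β c f
  · exact fun f₁ _ f₂ _ => phiStar_mul α β lam hlam₂ f₁ f₂

end
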